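/- For every positive integer n, ∑_{k=0}^{n-1} 1/binom(n-1,k)² = (2n²/(n+1)) · ∑_{k=1}^{n} 1/(k·binom(2n+1-k, n-k)), as an identity of rational numbers. -/

import Mathlib

open Finset

lemma stepC (n k : ℕ) (h1 : 1 ≤ k) (h2 : k < n) :
    ((k : ℚ) + 1) / ((2 * n + 3 - k).choose (n - k) : ℚ)
      = (k : ℚ) * ((n : ℚ) - k) / (((n : ℚ) + 1) * ((2 * n + 2 - k).choose (n - 1 - k) : ℚ))
        - ((k : ℚ) - 1) * ((n : ℚ) + 1 - k) / (((n : ℚ) + 1) * ((2 * n + 3 - k).choose (n - k) : ℚ)) := by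
  have rel : (2 * n + 3 - k) * (2 * n + 2 - k).choose (n - 1 - k) =
      (2 * n + 3 - k).choose (n - k) * (n - k) := by
    have ha : 2 * n + 3 - k = (2 * n + 2 - k) + 1 := by omega
    have hb : n - k = (n - 1 - k) + 1 := by omega
    rw [ha, hb]
    simpa [Nat.succ_eq_add_one] using Nat.add_one_mul_choose_eq (2 * n + 2 - k) (n - 1 - k)
  have hc : 0 < (2 * n + 3 - k).choose (n - k) := Nat.choose_pos (by omega)
  have he : 0 < (2 * n + 2 - k).choose (n - 1 - k) := Nat.choose_pos (by omega)
  have relQ := congrArg (fun x : ℕ => (x : ℚ)) rel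
  push_cast [Nat.cast_sub (show k ≤ 2 * n + 3 by omega), Nat.cast_sub (show k ≤ n by omega)] at relQ
  set c : ℚ := ((2 * n + 3 - k).choose (n - k) : ℚ) with hcq
  set e : ℚ := ((2 * n + 2 - k).choose (n - 1 - k) : ℚ) with heq
  have hc0 : c ≠ 0 := by positivity
  have he0 : e ≠ 0 := by positivity
  have hd : (2 * (n : ℚ) + 3 - k) ≠ 0 := by
    have : (k : ℚ) < n := by exact_mod_cast h2
    nlinarith
  have hE : e = c * ((n : ℚ) - k) / (2 * (n : ℚ) + 3 - k) := by
    rw [eq_div_iff hd]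
    linarith [relQ]
  rw [hE]
  have hn1 : ((n : ℚ) + 1) ≠ 0 := by positivity
  have hnk : ((n : ℚ) - k) ≠ 0 := by
    have : (k : ℚ) < n := by exact_mod_cast h2
    intro h; nlinarith
  field_simp
  ring

lemma lemC (n : ℕ) :
    ∑ k ∈ Icc 1 n, ((k : ℚ) + 1) / ((2 * n + 3 - k).choose (n - k) : ℚ)
      = n * (n + 3) / (n + 1) := by
  rcases n with _ | p
  · simp
  set n := p + 1 with hn
  have hsplit : ∑ k ∈ Icc 1 n, ((k : ℚ) + 1) / ((2 * n + 3 - k).choose (n - k) : ℚ)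
      = (∑ k ∈ Icc 1 p, ((k : ℚ) + 1) / ((2 * n + 3 - k).choose (n - k) : ℚ))
        + (((n : ℚ) + 1) / ((2 * n + 3 - n).choose (n - n) : ℚ)) := by
    rw [hn, Finset.sum_Icc_succ_top (by omega)]
  rw [hsplit]
  have hlast : (((n : ℚ) + 1) / ((2 * n + 3 - n).choose (n - n) : ℚ)) = (n : ℚ) + 1 := by
    have : 2 * n + 3 - n = n + 3 := by omega
    simp [this]
  rw [hlast]
  -- telescoping part
  set H : ℕ → ℚ := fun j => ((j : ℚ) - 1) * ((n : ℚ) + 1 - j) /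
      (((n : ℚ) + 1) * ((2 * n + 3 - j).choose (n - j) : ℚ)) with hH
  have hmain : ∑ k ∈ Icc 1 p, ((k : ℚ) + 1) / ((2 * n + 3 - k).choose (n - k) : ℚ)
      = H n - H 1 := by
    rw [← Finset.Ico_add_one_right_eq_Icc, Finset.sum_Ico_eq_sum_range]
    have : p + 1 - 1 = p := by omega
    rw [this]
    have hterm : ∀ i ∈ Finset.range p,
        (((1 + i : ℕ) : ℚ) + 1) / ((2 * n + 3 - (1 + i)).choose (n - (1 + i)) : ℚ)
          = H (i + 1 + 1) - H (i + 1) := by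
      intro i hi
      rw [Finset.mem_range] at hi
      have hk2 : 1 + i < n := by omega
      have hst := stepC n (1 + i) (by omega) hk2
      rw [hst]
      simp only [hH]
      have e1 : 2 * n + 3 - (i + 1 + 1) = 2 * n + 2 - (1 + i) := by omega
      have e2 : n - (i + 1 + 1) = n - 1 - (1 + i) := by omega
      have e3 : 2 * n + 3 - (i + 1) = 2 * n + 3 - (1 + i) := by omega
      have e4 : n - (i + 1) = n - (1 + i) := by omega
      rw [e1, e2, e3, e4]
      push_cast
      ring
    rw [Finset.sum_congr rfl hterm, Finset.sum_range_sub (fun i => H (i + 1))]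
  rw [hmain]
  have hH1 : H 1 = 0 := by simp [hH]
  have hHn : H n = ((n : ℚ) - 1) / ((n : ℚ) + 1) := by
    simp only [hH]
    have : 2 * n + 3 - n = n + 3 := by omega
    rw [this, Nat.sub_self]
    simp
  rw [hH1, hHn]
  have hn1 : ((n : ℚ) + 1) ≠ 0 := by positivity
  field_simp
  ring

def B (n : ℕ) : ℚ := ∑ k ∈ Icc 1 n, (1 : ℚ) / ((k : ℚ) * ((2 * n + 1 - k).choose (n - k) : ℚ))

lemma stepB (n k : ℕ) (h1 : 1 ≤ k) (h2 : k ≤ n) :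
    2 * ((n : ℚ) + 1) * (2 * (n : ℚ) + 3) *
        ((1 : ℚ) / ((k : ℚ) * ((2 * (n + 1) + 1 - k).choose ((n + 1) - k) : ℚ)))
      - ((n : ℚ) + 1) * ((n : ℚ) + 2) *
        ((1 : ℚ) / ((k : ℚ) * ((2 * n + 1 - k).choose (n - k) : ℚ)))
      = -(((n : ℚ) + 1) * ((k : ℚ) + 1)) / (((n : ℚ) + 3) * ((2 * n + 3 - k).choose (n - k) : ℚ)) := by
  have ed : 2 * (n + 1) + 1 - k = 2 * n + 3 - k := by omega
  have ed2 : (n + 1) - k = (n - k) + 1 := by omega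
  rw [ed, ed2]
  -- binomial facts
  have f1 : (2 * n + 1 - k).choose (n - k) * (2 * n + 2 - k) =
      (2 * n + 2 - k).choose (n - k) * (n + 2) := by
    have := Nat.choose_mul_succ_eq (2 * n + 1 - k) (n - k)
    have ha : 2 * n + 1 - k + 1 = 2 * n + 2 - k := by omega
    have hb : 2 * n + 2 - k - (n - k) = n + 2 := by omega
    rw [ha] at this; rw [this, hb]
  have f2 : (2 * n + 2 - k).choose (n - k) * (2 * n + 3 - k) =
      (2 * n + 3 - k).choose (n - k) * (n + 3) := by
    have := Nat.choose_mul_succ_eq (2 * n + 2 - k) (n - k)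
    have ha : 2 * n + 2 - k + 1 = 2 * n + 3 - k := by omega
    have hb : 2 * n + 3 - k - (n - k) = n + 3 := by omega
    rw [ha] at this; rw [this, hb]
  have f3 : (2 * n + 3 - k).choose ((n - k) + 1) * ((n - k) + 1) =
      (2 * n + 3 - k).choose (n - k) * (n + 3) := by
    have := Nat.choose_succ_right_eq (2 * n + 3 - k) (n - k)
    have hb : 2 * n + 3 - k - (n - k) = n + 3 := by omega
    rw [hb] at this; exact this
  have pa : 0 < (2 * n + 1 - k).choose (n - k) := Nat.choose_pos (by omega)
  have pb : 0 < (2 * n + 2 - k).choose (n - k) := Nat.choose_pos (by omega)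
  have pc : 0 < (2 * n + 3 - k).choose (n - k) := Nat.choose_pos (by omega)
  have pd : 0 < (2 * n + 3 - k).choose ((n - k) + 1) := Nat.choose_pos (by omega)
  have hkn : (k : ℚ) ≤ n := by exact_mod_cast h2
  have hk1 : (1 : ℚ) ≤ k := by exact_mod_cast h1
  -- cast facts
  have q1 : ((2 * n + 1 - k).choose (n - k) : ℚ) * (2 * (n : ℚ) + 2 - k) =
      ((2 * n + 2 - k).choose (n - k) : ℚ) * ((n : ℚ) + 2) := by
    have := congrArg (fun x : ℕ => (x : ℚ)) f1
    push_cast [Nat.cast_sub (show k ≤ 2 * n + 2 by omega)] at this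
    convert this using 2 <;> ring
  have q2 : ((2 * n + 2 - k).choose (n - k) : ℚ) * (2 * (n : ℚ) + 3 - k) =
      ((2 * n + 3 - k).choose (n - k) : ℚ) * ((n : ℚ) + 3) := by
    have := congrArg (fun x : ℕ => (x : ℚ)) f2
    push_cast [Nat.cast_sub (show k ≤ 2 * n + 3 by omega)] at this
    convert this using 2 <;> ring
  have q3 : ((2 * n + 3 - k).choose ((n - k) + 1) : ℚ) * ((n : ℚ) + 1 - k) =
      ((2 * n + 3 - k).choose (n - k) : ℚ) * ((n : ℚ) + 3) := by
    have := congrArg (fun x : ℕ => (x : ℚ)) f3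
    push_cast [Nat.cast_sub (show k ≤ n by omega)] at this
    convert this using 2 <;> ring
  set a : ℚ := ((2 * n + 1 - k).choose (n - k) : ℚ)
  set b : ℚ := ((2 * n + 2 - k).choose (n - k) : ℚ)
  set c : ℚ := ((2 * n + 3 - k).choose (n - k) : ℚ)
  set d : ℚ := ((2 * n + 3 - k).choose ((n - k) + 1) : ℚ)
  have ha0 : a ≠ 0 := by positivity
  have hb0 : b ≠ 0 := by positivity
  have hc0 : c ≠ 0 := by positivity
  have hd0 : d ≠ 0 := by positivity
  have hk0 : (k : ℚ) ≠ 0 := by positivity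
  have h23 : (2 * (n : ℚ) + 3 - k) ≠ 0 := by nlinarith
  have h22 : (2 * (n : ℚ) + 2 - k) ≠ 0 := by nlinarith
  have hn1k : ((n : ℚ) + 1 - k) ≠ 0 := by nlinarith
  have hA : a = c * ((n : ℚ) + 3) * ((n : ℚ) + 2) / ((2 * (n : ℚ) + 2 - k) * (2 * (n : ℚ) + 3 - k)) := by
    rw [eq_div_iff (mul_ne_zero h22 h23)]
    linear_combination (2 * (n : ℚ) + 3 - k) * q1 + ((n : ℚ) + 2) * q2
  have hD : d = c * ((n : ℚ) + 3) / ((n : ℚ) + 1 - k) := by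
    field_simp
    linarith [q3]
  rw [hA, hD]
  field_simp
  ring

lemma lemB (n : ℕ) :
    2 * ((n : ℚ) + 1) * (2 * (n : ℚ) + 3) * B (n + 1)
      = ((n : ℚ) + 1) * ((n : ℚ) + 2) * B n + 3 * ((n : ℚ) + 2) := by
  have hsplit : B (n + 1)
      = (∑ k ∈ Icc 1 n, (1 : ℚ) / ((k : ℚ) * ((2 * (n + 1) + 1 - k).choose ((n + 1) - k) : ℚ)))
        + 1 / ((n : ℚ) + 1) := by
    rw [B, Finset.sum_Icc_succ_top (by omega)]
    congr 1
    have h1 : 2 * (n + 1) + 1 - (n + 1) = n + 2 := by omega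
    have h2 : (n + 1) - (n + 1) = 0 := by omega
    rw [h1, h2]
    push_cast [Nat.choose_zero_right]
    ring
  rw [hsplit, B]
  have key : ∑ k ∈ Icc 1 n,
      (2 * ((n : ℚ) + 1) * (2 * (n : ℚ) + 3) *
          ((1 : ℚ) / ((k : ℚ) * ((2 * (n + 1) + 1 - k).choose ((n + 1) - k) : ℚ)))
        - ((n : ℚ) + 1) * ((n : ℚ) + 2) *
          ((1 : ℚ) / ((k : ℚ) * ((2 * n + 1 - k).choose (n - k) : ℚ)))) = -(n : ℚ) := by
    have h1 : ∀ k ∈ Icc 1 n,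
        (2 * ((n : ℚ) + 1) * (2 * (n : ℚ) + 3) *
            ((1 : ℚ) / ((k : ℚ) * ((2 * (n + 1) + 1 - k).choose ((n + 1) - k) : ℚ)))
          - ((n : ℚ) + 1) * ((n : ℚ) + 2) *
            ((1 : ℚ) / ((k : ℚ) * ((2 * n + 1 - k).choose (n - k) : ℚ))))
          = (-(((n : ℚ) + 1)) / ((n : ℚ) + 3)) *
              (((k : ℚ) + 1) / ((2 * n + 3 - k).choose (n - k) : ℚ)) := by
      intro k hk
      rw [Finset.mem_Icc] at hk
      rw [stepB n k hk.1 hk.2, neg_div, div_mul_div_comm]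
      ring
    rw [Finset.sum_congr rfl h1, ← Finset.mul_sum, lemC n]
    have hn1 : ((n : ℚ) + 1) ≠ 0 := by positivity
    have hn3 : ((n : ℚ) + 3) ≠ 0 := by positivity
    field_simp
  rw [Finset.sum_sub_distrib, ← Finset.mul_sum, ← Finset.mul_sum] at key
  have hn1 : ((n : ℚ) + 1) ≠ 0 := by positivity
  rw [mul_add]
  have hlast2 : 2 * ((n : ℚ) + 1) * (2 * (n : ℚ) + 3) * (1 / ((n : ℚ) + 1)) = 2 * (2 * (n : ℚ) + 3) := by
    field_simp
  rw [hlast2]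
  linear_combination key

def S (m : ℕ) : ℚ := ∑ k ∈ range (m + 1), 1 / (m.choose k : ℚ) ^ 2

noncomputable def G (m : ℕ) : ℕ → ℚ := fun j =>
  (2 * (j : ℚ) ^ 3 - (7 * (m : ℚ) + 10) * (j : ℚ) ^ 2
    + 2 * ((m : ℚ) + 1) * (4 * (m : ℚ) + 7) * (j : ℚ)
    - 3 * ((m : ℚ) + 2) * ((m : ℚ) + 1) ^ 2) / (m.choose j : ℚ) ^ 2

lemma stepA (m k : ℕ) (hk : k < m) :
    2 * ((m : ℚ) + 1) ^ 2 * (2 * (m : ℚ) + 5) * (1 / ((m + 1).choose k : ℚ) ^ 2)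
      - ((m : ℚ) + 2) ^ 3 * (1 / (m.choose k : ℚ) ^ 2)
      = G m (k + 1) - G m k := by
  have f1 : m.choose k * (m + 1) = (m + 1).choose k * (m + 1 - k) :=
    Nat.choose_mul_succ_eq m k
  have f2 : m.choose (k + 1) * (k + 1) = m.choose k * (m - k) :=
    Nat.choose_succ_right_eq m k
  have pc : 0 < m.choose k := Nat.choose_pos (by omega)
  have pc' : 0 < m.choose (k + 1) := Nat.choose_pos (by omega)
  have pe : 0 < (m + 1).choose k := Nat.choose_pos (by omega)
  have q1 : (m.choose k : ℚ) * ((m : ℚ) + 1) = ((m + 1).choose k : ℚ) * ((m : ℚ) + 1 - k) := by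
    have := congrArg (fun x : ℕ => (x : ℚ)) f1
    push_cast [Nat.cast_sub (show k ≤ m + 1 by omega)] at this
    convert this using 2 <;> ring
  have q2 : (m.choose (k + 1) : ℚ) * ((k : ℚ) + 1) = (m.choose k : ℚ) * ((m : ℚ) - k) := by
    have := congrArg (fun x : ℕ => (x : ℚ)) f2
    push_cast [Nat.cast_sub (show k ≤ m by omega)] at this
    convert this using 2 <;> ring
  rw [G, G]
  set c : ℚ := (m.choose k : ℚ)
  set c' : ℚ := (m.choose (k + 1) : ℚ)
  set e : ℚ := ((m + 1).choose k : ℚ)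
  have hc0 : c ≠ 0 := by positivity
  have hc'0 : c' ≠ 0 := by positivity
  have he0 : e ≠ 0 := by positivity
  have hkm : (k : ℚ) < m := by exact_mod_cast hk
  have hm1k : ((m : ℚ) + 1 - k) ≠ 0 := by nlinarith
  have hmk : ((m : ℚ) - k) ≠ 0 := by nlinarith
  have hk1 : ((k : ℚ) + 1) ≠ 0 := by positivity
  have hE : e = c * ((m : ℚ) + 1) / ((m : ℚ) + 1 - k) := by
    field_simp
    linarith [q1]
  have hC : c' = c * ((m : ℚ) - k) / ((k : ℚ) + 1) := by
    field_simp
    linarith [q2]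
  rw [hE, hC]
  push_cast
  field_simp
  ring

lemma recA (m : ℕ) :
    2 * ((m : ℚ) + 1) ^ 2 * (2 * (m : ℚ) + 5) * S (m + 1)
      = ((m : ℚ) + 2) ^ 3 * S m + 6 * ((m : ℚ) + 1) ^ 2 * ((m : ℚ) + 2) := by
  have hs : S (m + 1) = (∑ k ∈ range (m + 1), 1 / ((m + 1).choose k : ℚ) ^ 2) + 1 := by
    rw [S, Finset.sum_range_succ, Nat.choose_self]
    norm_num
  rw [hs, S]
  have key : ∑ k ∈ range (m + 1),
      (2 * ((m : ℚ) + 1) ^ 2 * (2 * (m : ℚ) + 5) * (1 / ((m + 1).choose k : ℚ) ^ 2)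
        - ((m : ℚ) + 2) ^ 3 * (1 / (m.choose k : ℚ) ^ 2))
      = 2 * ((m : ℚ) + 1) ^ 3 := by
    rw [Finset.sum_range_succ]
    have htele : ∑ k ∈ range m,
        (2 * ((m : ℚ) + 1) ^ 2 * (2 * (m : ℚ) + 5) * (1 / ((m + 1).choose k : ℚ) ^ 2)
          - ((m : ℚ) + 2) ^ 3 * (1 / (m.choose k : ℚ) ^ 2))
        = G m m - G m 0 := by
      rw [Finset.sum_congr rfl (fun k hk => stepA m k (Finset.mem_range.mp hk))]
      exact Finset.sum_range_sub (G m) m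
    rw [htele]
    have hGm : G m m = -((m : ℚ) + 6) := by
      rw [G, Nat.choose_self]
      push_cast
      norm_num
      ring
    have hG0 : G m 0 = -(3 * ((m : ℚ) + 2) * ((m : ℚ) + 1) ^ 2) := by
      rw [G, Nat.choose_zero_right]
      push_cast
      norm_num
    have hlast : (m + 1).choose m = m + 1 := Nat.choose_succ_self_right m
    have hlast2 : m.choose m = 1 := Nat.choose_self m
    rw [hGm, hG0, hlast, hlast2]
    have hm1 : ((m : ℚ) + 1) ≠ 0 := by positivity
    push_cast
    field_simp
    ring
  rw [Finset.sum_sub_distrib, ← Finset.mul_sum, ← Finset.mul_sum] at key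
  rw [mul_add, mul_one]
  linear_combination key

lemma key (m : ℕ) : S m = 2 * ((m : ℚ) + 1) ^ 2 / ((m : ℚ) + 2) * B (m + 1) := by
  induction m with
  | zero =>
    rw [S, B]
    norm_num
  | succ m ih =>
    have h1 := recA m
    have h2 := lemB (m + 1)
    push_cast at h2 ⊢
    have hm1 : ((m : ℚ) + 1) ≠ 0 := by positivity
    have hm2 : ((m : ℚ) + 2) ≠ 0 := by positivity
    have hm3 : ((m : ℚ) + 3) ≠ 0 := by positivity
    have hm5 : (2 * (m : ℚ) + 5) ≠ 0 := by positivity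
    have hS1 : S (m + 1) = (((m : ℚ) + 2) ^ 3 * S m + 6 * ((m : ℚ) + 1) ^ 2 * ((m : ℚ) + 2))
        / (2 * ((m : ℚ) + 1) ^ 2 * (2 * (m : ℚ) + 5)) := by
      field_simp
      linear_combination h1
    have hB2 : B (m + 1 + 1) = ((((m : ℚ) + 2) * ((m : ℚ) + 3)) * B (m + 1) + 3 * ((m : ℚ) + 3))
        / (2 * ((m : ℚ) + 2) * (2 * (m : ℚ) + 5)) := by
      field_simp
      linear_combination h2
    rw [hS1, hB2, ih]
    field_simp
    ring

/-- For every positive integer `n`: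
`∑_{k=0}^{n-1} 1/C(n-1,k)² = (2n²/(n+1)) · ∑_{k=1}^{n} 1/(k·C(2n+1-k, n-k))`
as an identity of rational numbers. -/
theorem sum_inv_binom_sq_eq (n : ℕ) (hn : 1 ≤ n) :
    ∑ k ∈ Finset.range n, (1 : ℚ) / ((n - 1).choose k : ℚ) ^ 2 =
      (2 * (n : ℚ) ^ 2 / ((n : ℚ) + 1)) *
        ∑ k ∈ Finset.Icc 1 n, (1 : ℚ) / ((k : ℚ) * ((2 * n + 1 - k).choose (n - k) : ℚ)) := by
  rcases n with _ | m
  · omega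
  simp only [Nat.add_sub_cancel]
  have h := key m
  rw [S, B] at h
  rw [h]
  push_cast
  ring
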